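/- Fix n ≥ 1. For every pair (C, F) of subsets of {1, …, n}, there exists a unique effective pair (B, E) of subsets of {1, …, n} such that J(C, F) = J(B, E). -/
import Mathlib


/-- `K` is an interval of `{1, …, n}`: a set `⟦i,j⟧ = {i, i+1, …, j}` with `1 ≤ i ≤ j ≤ n`. -/
def IsInterval (n : ℕ) (K : Set ℕ) : Prop :=
  ∃ i j, 1 ≤ i ∧ i ≤ j ∧ j ≤ n ∧ K = Set.Icc i j

/-- The lower bound `b(K)` of an interval `K`. -/
noncomputable def intB (K : Set ℕ) : ℕ := sInf K

/-- The upper bound `e(K)` of an interval `K`. -/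
noncomputable def intE (K : Set ℕ) : ℕ := sSup K

/-- `J(B, E)`: the set of intervals `K` of `{1, …, n}` with `b(K) ∈ B` and `e(K) ∈ E`. -/
def intervalsOf (n : ℕ) (B E : Set ℕ) : Set (Set ℕ) :=
  {K | IsInterval n K ∧ intB K ∈ B ∧ intE K ∈ E}

/-- Two intervals `K`, `L` are adjacent if `b(K) = e(L) + 1` or `b(L) = e(K) + 1`. -/
def Adjacent (K L : Set ℕ) : Prop :=
  intB K = intE L + 1 ∨ intB L = intE K + 1

/-- An interval set is adjacency-avoiding if it contains no pair of adjacent intervals. -/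
def AdjAvoiding (J : Set (Set ℕ)) : Prop :=
  ∀ K ∈ J, ∀ L ∈ J, ¬ Adjacent K L

/-- The shift `A[1] = {a + 1 : a ∈ A}` of a set of integers. -/
def shiftSet (A : Set ℕ) : Set ℕ := (· + 1) '' A

/-- `(B, E)` is an effective pair: every element of `B` is below some element of `E`,
and every element of `E` is above some element of `B`. -/
def Effective (B E : Set ℕ) : Prop :=
  (∀ b ∈ B, ∃ e ∈ E, b ≤ e) ∧ (∀ e ∈ E, ∃ b ∈ B, b ≤ e)

lemma intB_Icc {a b : ℕ} (h : a ≤ b) : intB (Set.Icc a b) = a := by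
  simp [intB, csInf_Icc h]

lemma intE_Icc {a b : ℕ} (h : a ≤ b) : intE (Set.Icc a b) = b := by
  simp [intE, csSup_Icc h]

lemma mem_intervalsOf_Icc {n a b : ℕ} {B E : Set ℕ} (h1 : 1 ≤ a) (h2 : a ≤ b)
    (h3 : b ≤ n) (hB : a ∈ B) (hE : b ∈ E) : Set.Icc a b ∈ intervalsOf n B E := by
  refine ⟨⟨a, b, h1, h2, h3, rfl⟩, ?_, ?_⟩
  · rwa [intB_Icc h2]
  · rwa [intE_Icc h2]

lemma eff_unique {n : ℕ} {B E B' E' : Set ℕ}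
    (hB : B ⊆ Set.Icc 1 n) (hE : E ⊆ Set.Icc 1 n)
    (hB' : B' ⊆ Set.Icc 1 n) (hE' : E' ⊆ Set.Icc 1 n)
    (heff : Effective B E) (heff' : Effective B' E')
    (h : intervalsOf n B E = intervalsOf n B' E') : B = B' ∧ E = E' := by
  have key : ∀ (B E B' E' : Set ℕ), B ⊆ Set.Icc 1 n → E ⊆ Set.Icc 1 n →
      Effective B E → intervalsOf n B E = intervalsOf n B' E' → B ⊆ B' ∧ E ⊆ E' := by
    intro B E B' E' hB hE heff h
    constructor
    · intro b hb
      obtain ⟨e, he, hbe⟩ := heff.1 b hb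
      have hK : Set.Icc b e ∈ intervalsOf n B' E' := by
        rw [← h]; exact mem_intervalsOf_Icc (hB hb).1 hbe (hE he).2 hb he
      have := hK.2.1; rwa [intB_Icc hbe] at this
    · intro e he
      obtain ⟨b, hb, hbe⟩ := heff.2 e he
      have hK : Set.Icc b e ∈ intervalsOf n B' E' := by
        rw [← h]; exact mem_intervalsOf_Icc (hB hb).1 hbe (hE he).2 hb he
      have := hK.2.2; rwa [intE_Icc hbe] at this
  obtain ⟨h1, h2⟩ := key B E B' E' hB hE heff h
  obtain ⟨h3, h4⟩ := key B' E' B E hB' hE' heff' h.symm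
  exact ⟨h1.antisymm h3, h2.antisymm h4⟩

/-- For every pair `(C, F)` of subsets of `{1, …, n}` there is a unique effective pair
`(B, E)` of subsets of `{1, …, n}` with `J(C, F) = J(B, E)`. -/
theorem exists_unique_effective (n : ℕ) (hn : 1 ≤ n) (C F : Set ℕ)
    (hC : C ⊆ Set.Icc 1 n) (hF : F ⊆ Set.Icc 1 n) :
    ∃! p : Set ℕ × Set ℕ,
      p.1 ⊆ Set.Icc 1 n ∧ p.2 ⊆ Set.Icc 1 n ∧ Effective p.1 p.2 ∧
        intervalsOf n C F = intervalsOf n p.1 p.2 := by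
  set B : Set ℕ := {b ∈ C | ∃ e ∈ F, b ≤ e} with hBdef
  set E : Set ℕ := {e ∈ F | ∃ b ∈ C, b ≤ e} with hEdef
  have hBsub : B ⊆ Set.Icc 1 n := fun b hb => hC hb.1
  have hEsub : E ⊆ Set.Icc 1 n := fun e he => hF he.1
  have heff : Effective B E := by
    constructor
    · rintro b ⟨hbC, e, heF, hbe⟩
      exact ⟨e, ⟨heF, b, hbC, hbe⟩, hbe⟩
    · rintro e ⟨heF, b, hbC, hbe⟩
      exact ⟨b, ⟨hbC, e, heF, hbe⟩, hbe⟩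
  have hJ : intervalsOf n C F = intervalsOf n B E := by
    ext K
    constructor
    · rintro ⟨hK, h1, h2⟩
      obtain ⟨i, j, hi1, hij, hjn, rfl⟩ := hK
      rw [intB_Icc hij] at h1
      rw [intE_Icc hij] at h2
      exact mem_intervalsOf_Icc hi1 hij hjn ⟨h1, j, h2, hij⟩ ⟨h2, i, h1, hij⟩
    · rintro ⟨hK, h1, h2⟩
      exact ⟨hK, h1.1, h2.1⟩
  refine ⟨(B, E), ⟨hBsub, hEsub, heff, hJ⟩, ?_⟩
  rintro ⟨B', E'⟩ ⟨hB', hE', heff', hJ'⟩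
  obtain ⟨hb, he⟩ := eff_unique hB' hE' hBsub hEsub heff' heff (hJ'.symm.trans hJ)
  exact Prod.ext hb he
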